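/- arXiv:1008.5143 — 2 statements merged into one kernel-verified Lean document; each statement's English description precedes it below -/
import Mathlib

section
/- Let n ∈ ℕ and 1 ≤ k ≤ n. Then f_{n,k} is a continuous, strictly increasing bijection of [0,1] onto [0,1]; moreover, if n ≥ 2 and p* ∈ [0,1] is a maximizer of ψ_{n,k} on [0,1], then p* ≥ (k-1)/(n-1) and f_{n,k}(u) = c_{n,k} · u for all u ∈ [0, p*]. -/
open MeasureTheory

/-- Binomial upper tail `B_{n,p}({k,…,n})`. -/
noncomputable def binTail (n k : ℕ) (p : ℝ) : ℝ :=
  ∑ j ∈ Finset.Icc k n, (n.choose j : ℝ) * p ^ j * (1 - p) ^ (n - j)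

/-- `ψ_{n,k}(p) = p⁻¹ B_{n,p}({k,…,n})`, extended continuously at `0`. -/
noncomputable def psi (n k : ℕ) (p : ℝ) : ℝ :=
  if p = 0 then (if k = 1 then (n : ℝ) else 0) else p⁻¹ * binTail n k p

/-- `c_{n,k} = sup_{p ∈ [0,1]} ψ_{n,k}(p)`. -/
noncomputable def cnk (n k : ℕ) : ℝ := sSup (psi n k '' Set.Icc 0 1)

/-- `f_{n,k}(u) = u ⋅ sup_{p ∈ [u,1]} ψ_{n,k}(p)`. -/
noncomputable def fnk (n k : ℕ) (u : ℝ) : ℝ := u * sSup (psi n k '' Set.Icc u 1)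

/-! ### Auxiliary definitions and lemmas -/

/-- The polynomial representation of `psi`. -/
noncomputable def qAux (n k : ℕ) (p : ℝ) : ℝ :=
  ∑ j ∈ Finset.Icc k n, (n.choose j : ℝ) * p ^ (j - 1) * (1 - p) ^ (n - j)

lemma qAux_cont (n k : ℕ) : Continuous (qAux n k) := by
  unfold qAux; fun_prop

lemma binTail_eq (n k : ℕ) (hk1 : 1 ≤ k) (p : ℝ) : binTail n k p = p * qAux n k p := by
  unfold binTail qAux
  rw [Finset.mul_sum]
  refine Finset.sum_congr rfl fun j hj => ?_
  have hj1 : 1 ≤ j := le_trans hk1 (Finset.mem_Icc.mp hj).1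
  have : p ^ j = p * p ^ (j - 1) := by
    conv_lhs => rw [show j = (j - 1) + 1 by omega]
    rw [pow_succ']
  rw [this]; ring

lemma psi_eq_qAux (n k : ℕ) (hk1 : 1 ≤ k) (hkn : k ≤ n) : psi n k = qAux n k := by
  funext p
  unfold psi
  by_cases hp : p = 0
  · subst hp
    rw [if_pos rfl]
    unfold qAux
    by_cases hk : k = 1
    · subst hk
      rw [Finset.sum_eq_single 1]
      · simp
      · intro j hj hne
        have hj1 : 1 ≤ j := (Finset.mem_Icc.mp hj).1
        have : j - 1 ≠ 0 := by omega
        simp [zero_pow this]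
      · intro h
        exact absurd (Finset.mem_Icc.mpr ⟨le_refl 1, hkn⟩) h
    · rw [if_neg hk]
      symm
      apply Finset.sum_eq_zero
      intro j hj
      have hj1 : k ≤ j := (Finset.mem_Icc.mp hj).1
      have : j - 1 ≠ 0 := by omega
      simp [zero_pow this]
  · rw [if_neg hp, binTail_eq n k hk1, ← mul_assoc, inv_mul_cancel₀ hp, one_mul]

lemma qAux_one (n k : ℕ) (hkn : k ≤ n) : qAux n k 1 = 1 := by
  unfold qAux
  rw [Finset.sum_eq_single n]
  · simp
  · intro j hj hne
    have : n - j ≠ 0 := by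
      have := (Finset.mem_Icc.mp hj).2; omega
    simp [zero_pow this]
  · intro h
    exact absurd (Finset.mem_Icc.mpr ⟨hkn, le_refl n⟩) h

lemma qAux_nonneg (n k : ℕ) {p : ℝ} (h0 : 0 ≤ p) (h1 : p ≤ 1) : 0 ≤ qAux n k p := by
  unfold qAux
  apply Finset.sum_nonneg
  intro j hj
  have h2 : (0:ℝ) ≤ 1 - p := by linarith
  have := Nat.cast_nonneg (α := ℝ) (n.choose j)
  positivity

lemma choose_id1 (n j : ℕ) (hn : 1 ≤ n) (hj : 1 ≤ j) :
    n * (n - 1).choose (j - 1) = n.choose j * j := by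
  have h := Nat.add_one_mul_choose_eq (n - 1) (j - 1)
  have hn' : n - 1 + 1 = n := by omega
  have hj' : j - 1 + 1 = j := by omega
  rwa [hn', hj'] at h

lemma choose_id2 (n j : ℕ) (hn : 1 ≤ n) :
    n * (n - 1).choose j = n.choose j * (n - j) := by
  rcases le_or_gt n j with h | h
  · have h1 : (n - 1).choose j = 0 := Nat.choose_eq_zero_of_lt (by omega)
    have h2 : n - j = 0 := by omega
    simp [h1, h2]
  · have h1 := Nat.choose_succ_right_eq n j
    have h2 := Nat.add_one_mul_choose_eq (n - 1) j
    have hn' : n - 1 + 1 = n := by omega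
    rw [hn'] at h2
    omega

/-- Telescoping helper. -/
noncomputable def GAux (n : ℕ) (p : ℝ) (j : ℕ) : ℝ :=
  (n : ℝ) * ((n - 1).choose j) * p ^ j * (1 - p) ^ (n - 1 - j)

lemma hasDerivAt_binTail (n k : ℕ) (hk1 : 1 ≤ k) (hkn : k ≤ n) (p : ℝ) :
    HasDerivAt (binTail n k)
      ((n : ℝ) * ((n - 1).choose (k - 1)) * p ^ (k - 1) * (1 - p) ^ (n - k)) p := by
  have hn : 1 ≤ n := le_trans hk1 hkn
  have key : ∀ j ∈ Finset.Icc k n,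
      HasDerivAt (fun x : ℝ => (n.choose j : ℝ) * x ^ j * (1 - x) ^ (n - j))
        (GAux n p (j - 1) - GAux n p j) p := by
    intro j hj
    obtain ⟨hjk, hjn⟩ := Finset.mem_Icc.mp hj
    have hj1 : 1 ≤ j := le_trans hk1 hjk
    have h1 : HasDerivAt (fun x : ℝ => x ^ j) ((j : ℝ) * p ^ (j - 1)) p := hasDerivAt_pow j p
    have h2 : HasDerivAt (fun x : ℝ => (1 - x) ^ (n - j))
        (-(((n - j : ℕ) : ℝ) * (1 - p) ^ (n - j - 1))) p := by
      have := (hasDerivAt_pow (n - j) (1 - p)).comp p ((hasDerivAt_id p).const_sub 1)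
      simpa [Function.comp_def] using this
    have h3 := (h1.const_mul ((n.choose j : ℝ))).fun_mul h2
    refine HasDerivAt.congr_deriv h3 (Eq.symm ?_)
    have e1 : ((n : ℝ) * ((n - 1).choose (j - 1))) = (n.choose j : ℝ) * j := by
      exact_mod_cast congrArg (Nat.cast : ℕ → ℝ) (choose_id1 n j hn hj1)
    have e2 : ((n : ℝ) * ((n - 1).choose j)) = (n.choose j : ℝ) * ((n - j : ℕ) : ℝ) := by
      exact_mod_cast congrArg (Nat.cast : ℕ → ℝ) (choose_id2 n j hn)
    have e3 : n - 1 - (j - 1) = n - j := by omega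
    have e4 : n - 1 - j = n - j - 1 := by omega
    unfold GAux
    rw [e3, e4, mul_assoc ((n:ℝ)) _ (p ^ (j-1)), mul_assoc ((n:ℝ)) _ (p ^ j),
        ← mul_assoc, ← mul_assoc, e1, e2]
    ring
  have hsum := HasDerivAt.fun_sum key
  have htel : (∑ j ∈ Finset.Icc k n, (GAux n p (j - 1) - GAux n p j)) = GAux n p (k - 1) := by
    rw [← Finset.Ico_add_one_right_eq_Icc, Finset.sum_Ico_eq_sum_range]
    have hc : ∀ i ∈ Finset.range (n + 1 - k), GAux n p (k + i - 1) - GAux n p (k + i) =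
        (fun i => GAux n p (k - 1 + i)) i - (fun i => GAux n p (k - 1 + i)) (i + 1) := by
      intro i _
      have a1 : k + i - 1 = k - 1 + i := by omega
      have a2 : k + i = k - 1 + (i + 1) := by omega
      show GAux n p (k + i - 1) - GAux n p (k + i) =
        GAux n p (k - 1 + i) - GAux n p (k - 1 + (i + 1))
      rw [a1, a2]
    rw [Finset.sum_congr rfl hc, Finset.sum_range_sub']
    have hGn : GAux n p (k - 1 + (n + 1 - k)) = 0 := by
      have h' : k - 1 + (n + 1 - k) = n := by omega
      rw [h']
      unfold GAux
      rw [Nat.choose_eq_zero_of_lt (by omega : n - 1 < n)]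
      simp
    rw [hGn, sub_zero]
    norm_num
  rw [htel] at hsum
  have hGk : GAux n p (k - 1) =
      (n : ℝ) * ((n - 1).choose (k - 1)) * p ^ (k - 1) * (1 - p) ^ (n - k) := by
    unfold GAux
    congr 1
    congr 1
    omega
  rw [hGk] at hsum
  exact hsum

lemma binTail_cont (n k : ℕ) : Continuous (binTail n k) := by
  unfold binTail; fun_prop

lemma binTail_strictMono (n k : ℕ) (hk1 : 1 ≤ k) (hkn : k ≤ n) :
    StrictMonoOn (binTail n k) (Set.Icc 0 1) := by
  apply strictMonoOn_of_deriv_pos (convex_Icc 0 1) (binTail_cont n k).continuousOn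
  intro x hx
  rw [interior_Icc] at hx
  rw [(hasDerivAt_binTail n k hk1 hkn x).deriv]
  have hn0 : (0:ℝ) < n := by
    exact_mod_cast lt_of_lt_of_le Nat.zero_lt_one (le_trans hk1 hkn)
  have hc : (0:ℝ) < ((n - 1).choose (k - 1) : ℝ) := by
    exact_mod_cast Nat.choose_pos (by omega : k - 1 ≤ n - 1)
  exact mul_pos (mul_pos (mul_pos hn0 hc) (pow_pos hx.1 _)) (pow_pos (by linarith [hx.2]) _)

noncomputable def DtermAux (n : ℕ) (p : ℝ) (j : ℕ) : ℝ :=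
  (n.choose j : ℝ) * (((j - 1 : ℕ) : ℝ) * p ^ (j - 1 - 1)) * (1 - p) ^ (n - j) +
    (n.choose j : ℝ) * p ^ (j - 1) * (((n - j : ℕ) : ℝ) * (1 - p) ^ (n - j - 1) * (-1))

lemma hasDerivAt_qAux (n k : ℕ) (p : ℝ) :
    HasDerivAt (qAux n k) (∑ j ∈ Finset.Icc k n, DtermAux n p j) p := by
  have key : ∀ j ∈ Finset.Icc k n,
      HasDerivAt (fun x : ℝ => (n.choose j : ℝ) * x ^ (j - 1) * (1 - x) ^ (n - j))
        (DtermAux n p j) p := by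
    intro j _
    have h1 : HasDerivAt (fun x : ℝ => x ^ (j - 1)) (((j - 1 : ℕ) : ℝ) * p ^ (j - 1 - 1)) p :=
      hasDerivAt_pow (j - 1) p
    have h2 : HasDerivAt (fun x : ℝ => (1 - x) ^ (n - j))
        (((n - j : ℕ) : ℝ) * (1 - p) ^ (n - j - 1) * (-1)) p := by
      have := (hasDerivAt_pow (n - j) (1 - p)).comp p ((hasDerivAt_id p).const_sub 1)
      simpa [Function.comp_def] using this
    have h3 := (h1.const_mul ((n.choose j : ℝ))).fun_mul h2
    exact h3
  exact HasDerivAt.fun_sum key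

lemma qAux_strictMono (n k : ℕ) (hk2 : 2 ≤ k) (hkn : k ≤ n) :
    StrictMonoOn (qAux n k) (Set.Icc 0 (((k : ℝ) - 1) / ((n : ℝ) - 1))) := by
  have hn2 : 2 ≤ n := le_trans hk2 hkn
  have hn1 : (0:ℝ) < (n : ℝ) - 1 := by
    have : (2:ℝ) ≤ n := by exact_mod_cast hn2
    linarith
  have hr1 : ((k : ℝ) - 1) / ((n : ℝ) - 1) ≤ 1 := by
    rw [div_le_one hn1]
    have : (k:ℝ) ≤ n := by exact_mod_cast hkn
    linarith
  apply strictMonoOn_of_deriv_pos (convex_Icc _ _)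
  · exact (qAux_cont n k).continuousOn
  intro x hx
  rw [interior_Icc] at hx
  obtain ⟨hx0, hxr⟩ := hx
  have hx1 : x < 1 := lt_of_lt_of_le hxr hr1
  have hxb : ((n:ℝ) - 1) * x < (k:ℝ) - 1 := by
    rw [← lt_div_iff₀' hn1]; exact hxr
  rw [(hasDerivAt_qAux n k x).deriv]
  apply Finset.sum_pos'
  · intro j hj
    obtain ⟨hjk, hjn⟩ := Finset.mem_Icc.mp hj
    have hj2 : 2 ≤ j := le_trans hk2 hjk
    rcases eq_or_lt_of_le hjn with rfl | hjlt
    · unfold DtermAux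
      simp only [Nat.sub_self, Nat.cast_zero, zero_mul, mul_zero, neg_zero, add_zero]
      positivity
    · unfold DtermAux
      have e1 : (1 - x) ^ (n - j) = (1 - x) ^ (n - j - 1) * (1 - x) := by
        conv_lhs => rw [show n - j = (n - j - 1) + 1 by omega]
        rw [pow_succ]
      have e2 : x ^ (j - 1) = x ^ (j - 1 - 1) * x := by
        conv_lhs => rw [show j - 1 = (j - 1 - 1) + 1 by omega]
        rw [pow_succ]
      rw [e1, e2]
      have hcast1 : ((j - 1 : ℕ) : ℝ) = (j : ℝ) - 1 := by
        have : 1 ≤ j := by omega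
        push_cast [this]; ring
      have hcast2 : ((n - j : ℕ) : ℝ) = (n : ℝ) - (j : ℝ) := by
        push_cast [hjn]; ring
      rw [hcast1, hcast2]
      have heq : (n.choose j : ℝ) * (((j:ℝ) - 1) * x ^ (j - 1 - 1)) *
            ((1 - x) ^ (n - j - 1) * (1 - x)) +
          (n.choose j : ℝ) * (x ^ (j - 1 - 1) * x) *
            (((n:ℝ) - (j:ℝ)) * (1 - x) ^ (n - j - 1) * (-1)) =
          (n.choose j : ℝ) * x ^ (j - 1 - 1) * (1 - x) ^ (n - j - 1) *
            (((j:ℝ) - 1) - ((n:ℝ) - 1) * x) := by ring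
      rw [heq]
      have hjk' : (k:ℝ) ≤ j := by exact_mod_cast hjk
      apply mul_nonneg
      · apply mul_nonneg (mul_nonneg (Nat.cast_nonneg _) (le_of_lt (pow_pos hx0 _)))
        exact le_of_lt (pow_pos (by linarith) _)
      · linarith
  · refine ⟨n, Finset.mem_Icc.mpr ⟨hkn, le_refl n⟩, ?_⟩
    unfold DtermAux
    simp only [Nat.sub_self, Nat.cast_zero, zero_mul, mul_zero, neg_zero, add_zero]
    have h0 : (0:ℝ) < ((n - 1 : ℕ) : ℝ) := by
      have h1 : 1 ≤ n - 1 := by omega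
      exact_mod_cast lt_of_lt_of_le Nat.zero_lt_one h1
    have h1 : (0:ℝ) < (n.choose n : ℝ) := by simp
    positivity

/-! ### Main theorem -/

/-- `f_{n,k}` is a continuous strictly increasing bijection of `[0,1]` onto `[0,1]`,
and for `n ≥ 2` it is linear with slope `c_{n,k}` on `[0, p*]` for any maximizer `p*` of
`ψ_{n,k}`, which moreover satisfies `p* ≥ (k-1)/(n-1)`. -/
theorem fnk_properties (n k : ℕ) (hk1 : 1 ≤ k) (hkn : k ≤ n) :
    ContinuousOn (fnk n k) (Set.Icc 0 1) ∧
    StrictMonoOn (fnk n k) (Set.Icc 0 1) ∧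
    Set.BijOn (fnk n k) (Set.Icc 0 1) (Set.Icc 0 1) ∧
    (2 ≤ n → ∀ pstar ∈ Set.Icc (0:ℝ) 1,
      (∀ p ∈ Set.Icc (0:ℝ) 1, psi n k p ≤ psi n k pstar) →
      ((k:ℝ) - 1) / ((n:ℝ) - 1) ≤ pstar ∧
      ∀ u ∈ Set.Icc (0:ℝ) pstar, fnk n k u = cnk n k * u) := by
  have hψ : psi n k = qAux n k := psi_eq_qAux n k hk1 hkn
  have hψcont : Continuous (psi n k) := hψ ▸ qAux_cont n k
  have hψ1 : psi n k 1 = 1 := by rw [hψ]; exact qAux_one n k hkn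
  have hψnn : ∀ p ∈ Set.Icc (0:ℝ) 1, 0 ≤ psi n k p := by
    intro p hp; rw [hψ]; exact qAux_nonneg n k hp.1 hp.2
  set M : ℝ → ℝ := fun u => sSup (psi n k '' Set.Icc u 1) with hM
  have hfnk : ∀ u, fnk n k u = u * M u := fun u => rfl
  -- basic sup facts
  have hbdd : ∀ u : ℝ, BddAbove (psi n k '' Set.Icc u 1) :=
    fun u => isCompact_Icc.bddAbove_image hψcont.continuousOn
  have hMmax : ∀ u : ℝ, u ≤ 1 → ∃ p₀ ∈ Set.Icc u 1, M u = psi n k p₀ ∧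
      ∀ p ∈ Set.Icc u 1, psi n k p ≤ psi n k p₀ := by
    intro u hu
    obtain ⟨p₀, hp₀, hmax⟩ := isCompact_Icc.exists_isMaxOn (Set.nonempty_Icc.mpr hu)
      hψcont.continuousOn
    refine ⟨p₀, hp₀, ?_, fun p hp => hmax hp⟩
    exact IsGreatest.csSup_eq ⟨⟨p₀, hp₀, rfl⟩, by rintro y ⟨p, hp, rfl⟩; exact hmax hp⟩
  have hle_M : ∀ u : ℝ, ∀ p ∈ Set.Icc u 1, psi n k p ≤ M u :=
    fun u p hp => le_csSup (hbdd u) ⟨p, hp, rfl⟩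
  have hM1 : ∀ u : ℝ, u ≤ 1 → 1 ≤ M u := by
    intro u hu
    have := hle_M u 1 ⟨hu, le_refl 1⟩
    rwa [hψ1] at this
  have hManti : ∀ u v : ℝ, u ≤ v → v ≤ 1 → M v ≤ M u := by
    intro u v huv hv
    apply csSup_le_csSup (hbdd u) ((Set.nonempty_Icc.mpr hv).image _)
    exact Set.image_mono (Set.Icc_subset_Icc_left huv)
  have hM1eq : M 1 = 1 := by
    rw [hM]
    simp only [Set.Icc_self, Set.image_singleton, csSup_singleton]
    exact hψ1
  have hf0 : fnk n k 0 = 0 := zero_mul _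
  have hf1 : fnk n k 1 = 1 := by rw [hfnk, hM1eq, one_mul]
  -- strict monotonicity
  have hSM : StrictMonoOn (fnk n k) (Set.Icc 0 1) := by
    intro u hu v hv huv
    have hv0 : 0 < v := lt_of_le_of_lt hu.1 huv
    have hMv : 0 < M v := lt_of_lt_of_le one_pos (hM1 v hv.2)
    rcases eq_or_lt_of_le hu.1 with h0 | hu0
    · rw [hfnk, hfnk, ← h0, zero_mul]
      exact mul_pos hv0 hMv
    · obtain ⟨p₀, hp₀mem, hMu, hp₀max⟩ := hMmax u hu.2
      rw [hfnk, hfnk, hMu]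
      rcases le_or_gt v p₀ with hcase | hcase
      · have h1 : psi n k p₀ ≤ M v := hle_M v p₀ ⟨hcase, hp₀mem.2⟩
        calc u * psi n k p₀ ≤ u * M v := by
              apply mul_le_mul_of_nonneg_left h1 (le_of_lt hu0)
          _ < v * M v := by exact mul_lt_mul_of_pos_right huv hMv
      · have hp₀01 : p₀ ∈ Set.Icc (0:ℝ) 1 := ⟨le_trans hu.1 hp₀mem.1, hp₀mem.2⟩
        have hψ0 : 0 ≤ psi n k p₀ := hψnn p₀ hp₀01
        calc u * psi n k p₀ ≤ p₀ * psi n k p₀ :=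
              mul_le_mul_of_nonneg_right hp₀mem.1 hψ0
          _ = binTail n k p₀ := by rw [hψ, ← binTail_eq n k hk1]
          _ < binTail n k v := binTail_strictMono n k hk1 hkn hp₀01 ⟨le_of_lt hv0, hv.2⟩ hcase
          _ = v * psi n k v := by rw [hψ, binTail_eq n k hk1]
          _ ≤ v * M v := mul_le_mul_of_nonneg_left
              (hle_M v v ⟨le_refl v, hv.2⟩) (le_of_lt hv0)
  -- continuity
  have hMcont : ContinuousOn M (Set.Icc 0 1) := by
    have hUC := Metric.uniformContinuousOn_iff.mp
      (isCompact_Icc.uniformContinuousOn_of_continuous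
        (s := Set.Icc (0:ℝ) 1) hψcont.continuousOn)
    have key : ∀ ε > (0:ℝ), ∃ δ > (0:ℝ), ∀ u ∈ Set.Icc (0:ℝ) 1, ∀ v ∈ Set.Icc (0:ℝ) 1,
        u ≤ v → dist u v < δ → M u - M v ≤ ε := by
      intro ε hε
      obtain ⟨δ, hδ, hδp⟩ := hUC ε hε
      refine ⟨δ, hδ, fun u hu v hv huv hd => ?_⟩
      obtain ⟨p₀, hp₀mem, hMu, _⟩ := hMmax u hu.2
      rcases le_or_gt v p₀ with hcase | hcase
      · have : psi n k p₀ ≤ M v := hle_M v p₀ ⟨hcase, hp₀mem.2⟩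
        rw [hMu]; linarith [hε]
      · have hp₀01 : p₀ ∈ Set.Icc (0:ℝ) 1 := ⟨le_trans hu.1 hp₀mem.1, hp₀mem.2⟩
        have hdist : dist p₀ v < δ := by
          rw [Real.dist_eq] at hd ⊢
          rw [abs_of_nonpos (by linarith [hcase] : p₀ - v ≤ 0)]
          rw [abs_of_nonpos (by linarith [huv] : u - v ≤ 0)] at hd
          have := hp₀mem.1
          linarith
        have h1 := hδp p₀ hp₀01 v hv hdist
        rw [Real.dist_eq] at h1
        have h2 : psi n k p₀ - psi n k v < ε := lt_of_le_of_lt (le_abs_self _) h1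
        have h3 : psi n k v ≤ M v := hle_M v v ⟨le_refl v, hv.2⟩
        rw [hMu]; linarith
    rw [Metric.continuousOn_iff]
    intro b hb ε hε
    obtain ⟨δ, hδ, hkey⟩ := key (ε / 2) (by linarith)
    refine ⟨δ, hδ, fun a ha hd => ?_⟩
    rw [Real.dist_eq]
    rcases le_total a b with hab | hab
    · have h1 := hkey a ha b hb hab hd
      have h2 := hManti a b hab hb.2
      rw [abs_of_nonneg (by linarith : 0 ≤ M a - M b)]
      linarith
    · have h1 := hkey b hb a ha hab (by rwa [dist_comm])
      have h2 := hManti b a hab ha.2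
      rw [abs_of_nonpos (by linarith : M a - M b ≤ 0)]
      linarith
  have hcont : ContinuousOn (fnk n k) (Set.Icc 0 1) := by
    have : ContinuousOn (fun u : ℝ => u * M u) (Set.Icc 0 1) :=
      continuousOn_id.mul hMcont
    exact this
  refine ⟨hcont, hSM, ?_, ?_⟩
  · -- bijection
    refine ⟨?_, hSM.injOn, ?_⟩
    · intro u hu
      constructor
      · rw [hfnk]
        exact mul_nonneg hu.1 (le_trans zero_le_one (hM1 u hu.2))
      · rcases eq_or_lt_of_le hu.2 with h1 | h1
        · rw [h1, hf1]
        · have := hSM.monotoneOn hu (Set.right_mem_Icc.mpr zero_le_one) hu.2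
          rw [hf1] at this
          exact this
    · intro y hy
      have := intermediate_value_Icc (zero_le_one (α := ℝ)) hcont
      rw [hf0, hf1] at this
      exact this hy
  · -- maximizer part
    intro h2n pstar hpstar hmax
    have hn1 : (0:ℝ) < (n : ℝ) - 1 := by
      have : (2:ℝ) ≤ n := by exact_mod_cast h2n
      linarith
    constructor
    · -- pstar ≥ (k-1)/(n-1)
      by_cases hk : k = 1
      · subst hk; simp [hpstar.1]
      · have hk2 : 2 ≤ k := by omega
        by_contra hlt
        push_neg at hlt
        set r := ((k:ℝ) - 1) / ((n:ℝ) - 1) with hr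
        have hr0 : 0 < r := by
          apply div_pos _ hn1
          have : (2:ℝ) ≤ k := by exact_mod_cast hk2
          linarith
        have hr1 : r ≤ 1 := by
          rw [hr, div_le_one hn1]
          have : (k:ℝ) ≤ n := by exact_mod_cast hkn
          linarith
        have hqlt : qAux n k pstar < qAux n k r :=
          qAux_strictMono n k hk2 hkn ⟨hpstar.1, le_of_lt hlt⟩
            ⟨le_of_lt hr0, le_refl r⟩ hlt
        have := hmax r ⟨le_of_lt hr0, hr1⟩
        rw [hψ] at this
        linarith
    · -- linearity on [0, pstar]
      intro u hu
      have hgr : IsGreatest (psi n k '' Set.Icc u 1) (psi n k pstar) := by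
        constructor
        · exact ⟨pstar, ⟨hu.2, hpstar.2⟩, rfl⟩
        · rintro y ⟨p, hp, rfl⟩
          exact hmax p ⟨le_trans hu.1 hp.1, hp.2⟩
      have hgr0 : IsGreatest (psi n k '' Set.Icc 0 1) (psi n k pstar) := by
        constructor
        · exact ⟨pstar, hpstar, rfl⟩
        · rintro y ⟨p, hp, rfl⟩
          exact hmax p hp
      have h1 : fnk n k u = u * psi n k pstar := by
        rw [hfnk]
        congr 1
        exact hgr.csSup_eq
      have h2 : cnk n k = psi n k pstar := hgr0.csSup_eq
      rw [h1, h2, mul_comm]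
end

section
/- Let n ∈ ℕ, 1 ≤ k ≤ n and p ∈ (0,1] with k < np. Then B_{n,p}({k,…,n}) ≥ (np-k)^2 / (np(1-p) + (np-k)^2). -/
open MeasureTheory

private lemma bern_eval0 (n : ℕ) (p : ℝ) :
    ∑ j ∈ Finset.range (n+1), (n.choose j : ℝ) * p ^ j * (1 - p) ^ (n - j) = 1 := by
  have h := congrArg (Polynomial.eval p) (bernsteinPolynomial.sum ℝ n)
  simpa [bernsteinPolynomial, Polynomial.eval_finset_sum] using h

private lemma bern_eval1 (n : ℕ) (p : ℝ) :
    ∑ j ∈ Finset.range (n+1), (j : ℝ) * ((n.choose j : ℝ) * p ^ j * (1 - p) ^ (n - j))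
      = n * p := by
  have h := congrArg (Polynomial.eval p) (bernsteinPolynomial.sum_smul ℝ n)
  simp only [Polynomial.eval_finset_sum, nsmul_eq_mul, Polynomial.eval_mul,
    Polynomial.eval_natCast, bernsteinPolynomial, Polynomial.eval_pow, Polynomial.eval_sub,
    Polynomial.eval_one, Polynomial.eval_X] at h
  simpa [mul_assoc] using h

private lemma bern_eval2 (n : ℕ) (p : ℝ) :
    ∑ j ∈ Finset.range (n+1), ((j:ℝ)^2 - j) * ((n.choose j : ℝ) * p ^ j * (1 - p) ^ (n - j))
      = ((n:ℝ)^2 - n) * p^2 := by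
  have h := congrArg (Polynomial.eval p) (bernsteinPolynomial.sum_mul_smul ℝ n)
  simp only [Polynomial.eval_finset_sum, nsmul_eq_mul, Polynomial.eval_mul,
    Polynomial.eval_natCast, bernsteinPolynomial, Polynomial.eval_pow, Polynomial.eval_sub,
    Polynomial.eval_one, Polynomial.eval_X, Nat.cast_mul] at h
  have cast_eq : ∀ m : ℕ, (m:ℝ) * ((m-1 : ℕ) : ℝ) = (m:ℝ)^2 - m := by
    rintro (_ | m) <;> push_cast <;> ring
  rw [← cast_eq, ← h]
  exact Finset.sum_congr rfl fun j _ => by rw [cast_eq]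

/-- One-sided Chebyshev bound:  for `p ∈ (0,1]` with `k < np`,
`B_{n,p}({k,…,n}) ≥ (np-k)² / (np(1-p) + (np-k)²)`. -/
theorem binTail_chebyshev (n k : ℕ) (hk1 : 1 ≤ k) (hkn : k ≤ n)
    (p : ℝ) (hp : p ∈ Set.Ioc (0:ℝ) 1) (hknp : (k : ℝ) < (n : ℝ) * p) :
    ((n : ℝ) * p - k) ^ 2 / ((n : ℝ) * p * (1 - p) + ((n : ℝ) * p - k) ^ 2)
      ≤ binTail n k p := by
  obtain ⟨hp0, hp1⟩ := hp
  set w : ℕ → ℝ := fun j => (n.choose j : ℝ) * p ^ j * (1 - p) ^ (n - j) with hw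
  have hwpos : ∀ j, 0 ≤ w j := fun j => by
    have : (0:ℝ) ≤ 1 - p := by linarith
    positivity
  set t : ℝ := (n : ℝ) * p - k with ht
  have htpos : 0 < t := by simpa [ht] using sub_pos.mpr hknp
  -- the full-range sums
  have S0 := bern_eval0 n p
  have S1 := bern_eval1 n p
  have S2 := bern_eval2 n p
  -- full-range sum of (j-k)*w and (j-k)^2*w
  have F1 : ∑ j ∈ Finset.range (n+1), ((j:ℝ) - k) * w j = t := by
    have : ∀ j : ℕ, ((j:ℝ) - k) * w j = (j:ℝ) * w j - (k:ℝ) * w j := fun j => by ring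
    simp_rw [this, Finset.sum_sub_distrib, ← Finset.mul_sum]
    rw [S1, S0, ht]; ring
  have F2 : ∑ j ∈ Finset.range (n+1), ((j:ℝ) - k) ^ 2 * w j
      = (n:ℝ) * p * (1 - p) + t ^ 2 := by
    have : ∀ j : ℕ, ((j:ℝ) - k) ^ 2 * w j
        = ((j:ℝ)^2 - j) * w j + (1 - 2*(k:ℝ)) * ((j:ℝ) * w j) + (k:ℝ)^2 * w j := fun j => by
      ring
    simp_rw [this, Finset.sum_add_distrib, ← Finset.mul_sum]
    rw [S2, S1, S0, ht]; ring
  -- split range (n+1) = Ico 0 k ∪ Ico k (n+1)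
  have hsplit : ∀ g : ℕ → ℝ, ∑ j ∈ Finset.range (n+1), g j
      = ∑ j ∈ Finset.Ico 0 k, g j + ∑ j ∈ Finset.Ico k (n+1), g j := by
    intro g
    rw [Finset.range_eq_Ico, ← Finset.sum_Ico_consecutive _ (Nat.zero_le k)
      (Nat.lt_succ_of_le hkn).le]
  have hIcc : Finset.Icc k n = Finset.Ico k (n+1) := by
    rw [Finset.Ico_add_one_right_eq_Icc]
  set T : ℝ := binTail n k p with hT
  have hTsum : T = ∑ j ∈ Finset.Ico k (n+1), w j := by rw [hT, binTail, hIcc]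
  set A : ℝ := ∑ j ∈ Finset.Ico k (n+1), ((j:ℝ) - k) * w j with hA
  set B : ℝ := ∑ j ∈ Finset.Ico k (n+1), ((j:ℝ) - k) ^ 2 * w j with hB
  -- t ≤ A
  have htA : t ≤ A := by
    rw [← F1, hsplit]
    have : ∑ j ∈ Finset.Ico 0 k, ((j:ℝ) - k) * w j ≤ 0 := by
      apply Finset.sum_nonpos
      intro j hj
      have hjk : j < k := (Finset.mem_Ico.mp hj).2
      have : (j:ℝ) - k ≤ 0 := by
        have : (j:ℝ) < k := by exact_mod_cast hjk
        linarith
      exact mul_nonpos_of_nonpos_of_nonneg this (hwpos j)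
    linarith
  -- B ≤ full sum
  have hBF : B ≤ (n:ℝ) * p * (1 - p) + t ^ 2 := by
    rw [← F2, hsplit]
    have : 0 ≤ ∑ j ∈ Finset.Ico 0 k, ((j:ℝ) - k) ^ 2 * w j :=
      Finset.sum_nonneg fun j _ => mul_nonneg (sq_nonneg _) (hwpos j)
    linarith
  -- Cauchy–Schwarz : A² ≤ T * B
  have hCS : A ^ 2 ≤ T * B := by
    rw [hTsum, hA, hB]
    exact Finset.sum_sq_le_sum_mul_sum_of_sq_eq_mul _
      (fun j _ => hwpos j)
      (fun j _ => mul_nonneg (sq_nonneg _) (hwpos j))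
      (fun j _ => by ring)
  set D : ℝ := (n:ℝ) * p * (1 - p) + t ^ 2 with hD
  have hDpos : 0 < D := by
    have : 0 ≤ (n:ℝ) * p * (1 - p) := by
      have : (0:ℝ) ≤ 1 - p := by linarith
      positivity
    nlinarith [sq_nonneg t]
  have hTpos : 0 ≤ T := by
    rw [hTsum]; exact Finset.sum_nonneg fun j _ => hwpos j
  have key : t ^ 2 ≤ T * D := by
    calc t ^ 2 ≤ A ^ 2 := by nlinarith
    _ ≤ T * B := hCS
    _ ≤ T * D := by exact mul_le_mul_of_nonneg_left hBF hTpos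
  rw [div_le_iff₀ hDpos] at *
  linarith [key]
end
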